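/- Let M be a discrete valuation field and ν_{i,j} (1 ≤ i < j ≤ n) rationals with ν_{i,j} ≥ ν_{i,l} + ν_{l,j} for i < l < j. Then H_{<ν} = {X ∈ UT_n(M) : v_M(x_{i,j}) > -ν_{i,j} for all i < j} is a normal subgroup of H_{≤ν} = {X ∈ UT_n(M) : v_M(x_{i,j}) ≥ -ν_{i,j} for all i < j}. -/
import Mathlib

set_option linter.unnecessarySeqFocus false
set_option linter.unusedSectionVars false

/-- The valuation of an element, viewed with rational values. -/
noncomputable def vQ {M : Type*} [Field M] (v : AddValuation M (WithTop ℤ)) (x : M) :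
    WithTop ℚ :=
  WithTop.map (fun z : ℤ => (z : ℚ)) (v x)

/-- Unipotent upper triangular matrix. -/
def IsUnitri {n : ℕ} {M : Type*} [Field M] (X : Matrix (Fin n) (Fin n) M) : Prop :=
  (∀ i j : Fin n, j < i → X i j = 0) ∧ ∀ i : Fin n, X i i = 1

/-- Membership in `H_{≤ν}`. -/
def MemHle {n : ℕ} {M : Type*} [Field M] (v : AddValuation M (WithTop ℤ))
    (ν : Fin n → Fin n → ℚ) (X : Matrix (Fin n) (Fin n) M) : Prop :=
  IsUnitri X ∧ ∀ i j : Fin n, i < j → ((-ν i j : ℚ) : WithTop ℚ) ≤ vQ v (X i j)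

/-- Membership in `H_{<ν}` (strict inequalities). -/
def MemHlt {n : ℕ} {M : Type*} [Field M] (v : AddValuation M (WithTop ℤ))
    (ν : Fin n → Fin n → ℚ) (X : Matrix (Fin n) (Fin n) M) : Prop :=
  IsUnitri X ∧ ∀ i j : Fin n, i < j → ((-ν i j : ℚ) : WithTop ℚ) < vQ v (X i j)

/-! ### Auxiliary lemmas -/

section Aux

variable {n : ℕ} {M : Type*} [Field M] (v : AddValuation M (WithTop ℤ)) (ν : Fin n → Fin n → ℚ)

lemma vQ_zero : vQ v (0 : M) = ⊤ := by simp [vQ]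

lemma vQ_neg (x : M) : vQ v (-x) = vQ v x := by simp [vQ]

lemma vQ_mul (x y : M) : vQ v (x * y) = vQ v x + vQ v y := by
  rw [vQ, vQ, vQ, v.map_mul]
  generalize v x = a; generalize v y = b
  induction a using WithTop.recTopCoe <;> induction b using WithTop.recTopCoe <;>
    simp [← WithTop.coe_add]

lemma min_le_vQ_add (x y : M) : min (vQ v x) (vQ v y) ≤ vQ v (x + y) := by
  have mono : Monotone (WithTop.map (fun z : ℤ => (z : ℚ))) :=
    WithTop.monotone_map_iff.2 (fun a b h => by exact_mod_cast h)
  calc min (vQ v x) (vQ v y) = WithTop.map (fun z : ℤ => (z : ℚ)) (min (v x) (v y)) :=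
        (mono.map_min).symm
    _ ≤ _ := mono (v.map_add x y)

/-- Strict order relation on `ℚ` vs `WithTop ℚ`. -/
abbrev Rlt : ℚ → WithTop ℚ → Prop := fun c x => (c : WithTop ℚ) < x

/-- Weak order relation on `ℚ` vs `WithTop ℚ`. -/
abbrev Rle : ℚ → WithTop ℚ → Prop := fun c x => (c : WithTop ℚ) ≤ x

lemma haddle {a b : ℚ} {x y : WithTop ℚ} (hx : Rle a x) (hy : Rle b y) : Rle (a + b) (x + y) := by
  induction x using WithTop.recTopCoe <;> induction y using WithTop.recTopCoe <;>
    simp_all [← WithTop.coe_add] <;> exact_mod_cast add_le_add hx hy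

lemma haddltle {a b : ℚ} {x y : WithTop ℚ} (hx : Rlt a x) (hy : Rle b y) :
    Rlt (a + b) (x + y) := by
  induction x using WithTop.recTopCoe <;> induction y using WithTop.recTopCoe <;>
    simp_all [← WithTop.coe_add] <;> exact_mod_cast add_lt_add_of_lt_of_le hx hy

lemma haddlelt {a b : ℚ} {x y : WithTop ℚ} (hx : Rle a x) (hy : Rlt b y) :
    Rlt (a + b) (x + y) := by
  induction x using WithTop.recTopCoe <;> induction y using WithTop.recTopCoe <;>
    simp_all [← WithTop.coe_add] <;> exact_mod_cast add_lt_add_of_le_of_lt hx hy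

lemma haddlt {a b : ℚ} {x y : WithTop ℚ} (hx : Rlt a x) (hy : Rlt b y) :
    Rlt (a + b) (x + y) := haddltle hx hy.le

lemma hupLt : ∀ c : ℚ, ∀ x y : WithTop ℚ, Rlt c x → x ≤ y → Rlt c y :=
  fun _ _ _ h hxy => lt_of_lt_of_le h hxy

lemma hupLe : ∀ c : ℚ, ∀ x y : WithTop ℚ, Rle c x → x ≤ y → Rle c y :=
  fun _ _ _ h hxy => le_trans h hxy

lemma htopLt : ∀ c : ℚ, Rlt c ⊤ := fun c => WithTop.coe_lt_top c

lemma htopLe : ∀ c : ℚ, Rle c ⊤ := fun _ => le_top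

lemma hmonoLt : ∀ c c' : ℚ, ∀ x : WithTop ℚ, c ≤ c' → Rlt c' x → Rlt c x :=
  fun _ _ _ h h' => lt_of_le_of_lt (WithTop.coe_le_coe.2 h) h'

lemma hmonoLe : ∀ c c' : ℚ, ∀ x : WithTop ℚ, c ≤ c' → Rle c' x → Rle c x :=
  fun _ _ _ h h' => le_trans (WithTop.coe_le_coe.2 h) h'

/-- Generic "strictly upper triangular with bound R" predicate. -/
def SB (R : ℚ → WithTop ℚ → Prop) (A : Matrix (Fin n) (Fin n) M) : Prop :=
  (∀ i j : Fin n, ¬ i < j → A i j = 0) ∧ ∀ i j : Fin n, i < j → R (-ν i j) (vQ v (A i j))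

variable {R R' R'' : ℚ → WithTop ℚ → Prop}

lemma R_sum (hup : ∀ c : ℚ, ∀ x y : WithTop ℚ, R c x → x ≤ y → R c y)
    (htop : ∀ c : ℚ, R c ⊤) {α : Type*} (s : Finset α) (f : α → M) (c : ℚ)
    (h : ∀ a ∈ s, R c (vQ v (f a))) : R c (vQ v (∑ a ∈ s, f a)) := by
  classical
  induction s using Finset.induction_on with
  | empty => simpa [vQ_zero] using htop c
  | @insert a s hx ih =>
    rw [Finset.sum_insert hx]
    have h1 : R c (min (vQ v (f a)) (vQ v (∑ b ∈ s, f b))) := by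
      rcases min_cases (vQ v (f a)) (vQ v (∑ b ∈ s, f b)) with ⟨he, _⟩ | ⟨he, _⟩ <;> rw [he]
      · exact h a (Finset.mem_insert_self a s)
      · exact ih fun b hb => h b (Finset.mem_insert_of_mem hb)
    exact hup _ _ _ h1 (min_le_vQ_add v _ _)

lemma SB_add (hup : ∀ c : ℚ, ∀ x y : WithTop ℚ, R c x → x ≤ y → R c y)
    {A B : Matrix (Fin n) (Fin n) M} (hA : SB v ν R A) (hB : SB v ν R B) :
    SB v ν R (A + B) := by
  refine ⟨fun i j hij => by simp [Matrix.add_apply, hA.1 i j hij, hB.1 i j hij],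
    fun i j hij => ?_⟩
  have h1 : R (-ν i j) (min (vQ v (A i j)) (vQ v (B i j))) := by
    rcases min_cases (vQ v (A i j)) (vQ v (B i j)) with ⟨he, _⟩ | ⟨he, _⟩ <;> rw [he]
    · exact hA.2 i j hij
    · exact hB.2 i j hij
  exact hup _ _ _ h1 (min_le_vQ_add v _ _)

lemma SB_mul (hν : ∀ i l j : Fin n, i < l → l < j → ν i l + ν l j ≤ ν i j)
    (hup : ∀ c : ℚ, ∀ x y : WithTop ℚ, R'' c x → x ≤ y → R'' c y)
    (htop : ∀ c : ℚ, R'' c ⊤)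
    (hmono : ∀ c c' : ℚ, ∀ x, c ≤ c' → R'' c' x → R'' c x)
    (hadd : ∀ a b : ℚ, ∀ x y : WithTop ℚ, R a x → R' b y → R'' (a + b) (x + y))
    {A B : Matrix (Fin n) (Fin n) M} (hA : SB v ν R A) (hB : SB v ν R' B) :
    SB v ν R'' (A * B) := by
  constructor
  · intro i j hij
    rw [Matrix.mul_apply]
    apply Finset.sum_eq_zero
    intro l _
    by_cases h1 : i < l
    · have h2 : ¬ l < j := fun h => hij (h1.trans h)
      rw [hB.1 l j h2, mul_zero]
    · rw [hA.1 i l h1, zero_mul]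
  · intro i j hij
    rw [Matrix.mul_apply]
    apply R_sum v hup htop
    intro l _
    by_cases h1 : i < l
    · by_cases h2 : l < j
      · rw [vQ_mul]
        have hb : R'' (-ν i l + -ν l j) (vQ v (A i l) + vQ v (B l j)) :=
          hadd _ _ _ _ (hA.2 i l h1) (hB.2 l j h2)
        exact hmono _ _ _ (by linarith [hν i l j h1 h2]) hb
      · rw [hB.1 l j h2, mul_zero, vQ_zero]; exact htop _
    · rw [hA.1 i l h1, zero_mul, vQ_zero]; exact htop _

lemma SB_zero (htop : ∀ c : ℚ, R c ⊤) : SB v ν R (0 : Matrix (Fin n) (Fin n) M) :=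
  ⟨fun _ _ _ => rfl, fun _ _ _ => by rw [Matrix.zero_apply, vQ_zero]; exact htop _⟩

lemma SB_sum (hup : ∀ c : ℚ, ∀ x y : WithTop ℚ, R c x → x ≤ y → R c y)
    (htop : ∀ c : ℚ, R c ⊤) {α : Type*} (s : Finset α) (f : α → Matrix (Fin n) (Fin n) M)
    (h : ∀ a ∈ s, SB v ν R (f a)) : SB v ν R (∑ a ∈ s, f a) := by
  classical
  induction s using Finset.induction_on with
  | empty => simpa using SB_zero v ν htop
  | @insert a s hx ih =>
    rw [Finset.sum_insert hx]
    exact SB_add v ν hup (h a (Finset.mem_insert_self a s))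
      (ih fun b hb => h b (Finset.mem_insert_of_mem hb))

lemma SB_neg {A : Matrix (Fin n) (Fin n) M} (hA : SB v ν R A) : SB v ν R (-A) := by
  refine ⟨fun i j hij => by simp [Matrix.neg_apply, hA.1 i j hij], fun i j hij => ?_⟩
  rw [Matrix.neg_apply, vQ_neg]
  exact hA.2 i j hij

lemma SB_pow (hν : ∀ i l j : Fin n, i < l → l < j → ν i l + ν l j ≤ ν i j)
    (hup : ∀ c : ℚ, ∀ x y : WithTop ℚ, R c x → x ≤ y → R c y)
    (htop : ∀ c : ℚ, R c ⊤)
    (hmono : ∀ c c' : ℚ, ∀ x, c ≤ c' → R c' x → R c x)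
    (hadd : ∀ a b : ℚ, ∀ x y : WithTop ℚ, R a x → R b y → R (a + b) (x + y))
    {A : Matrix (Fin n) (Fin n) M} (hA : SB v ν R A) (k : ℕ) : SB v ν R (A ^ (k + 1)) := by
  induction k with
  | zero => simpa using hA
  | succ k ih =>
    rw [pow_succ]
    exact SB_mul v ν hν hup htop hmono hadd ih hA

/-- Strictly upper triangular matrices are nilpotent. -/
lemma strict_pow_zero {A : Matrix (Fin n) (Fin n) M}
    (h0 : ∀ i j : Fin n, ¬ i < j → A i j = 0) : A ^ n = 0 := by
  have key : ∀ k : ℕ, ∀ i j : Fin n, (A ^ k) i j ≠ 0 → (i : ℕ) + k ≤ (j : ℕ) := by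
    intro k
    induction k with
    | zero =>
      intro i j h
      rw [pow_zero] at h
      by_cases hij : i = j
      · simp [hij]
      · exact absurd (Matrix.one_apply_ne hij) h
    | succ k ih =>
      intro i j h
      rw [pow_succ, Matrix.mul_apply] at h
      obtain ⟨l, _, hl⟩ := Finset.exists_ne_zero_of_sum_ne_zero h
      have h1 : (A ^ k) i l ≠ 0 := fun hz => hl (by rw [hz, zero_mul])
      have h2 : A l j ≠ 0 := fun hz => hl (by rw [hz, mul_zero])
      have h3 := ih i l h1
      have h4 : l < j := by by_contra hc; exact h2 (h0 l j hc)
      omega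
  ext i j
  by_contra h
  have := key n i j h
  omega

/-- Neumann series gives a right inverse for `1 + A` with `A` strictly upper triangular. -/
lemma neumann {A : Matrix (Fin n) (Fin n) M}
    (h0 : ∀ i j : Fin n, ¬ i < j → A i j = 0) :
    (1 + A) * (∑ k ∈ Finset.range (n + 1), (-A) ^ k) = 1 := by
  set Z := ∑ k ∈ Finset.range (n + 1), (-A) ^ k with hZ
  have hneg : ∀ i j : Fin n, ¬ i < j → (-A) i j = 0 := fun i j hij => by
    simp [Matrix.neg_apply, h0 i j hij]
  have hnil : (-A) ^ (n + 1) = 0 := by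
    rw [pow_succ, strict_pow_zero hneg, zero_mul]
  have hAZ : A * Z = 1 - Z := by
    have h1 : A * Z = -∑ k ∈ Finset.range (n + 1), (-A) ^ (k + 1) := by
      rw [hZ, Finset.mul_sum, ← Finset.sum_neg_distrib]
      apply Finset.sum_congr rfl
      intro k _
      rw [pow_succ', neg_mul, neg_neg]
    have h2 : ∑ k ∈ Finset.range (n + 1), (-A) ^ (k + 1) = Z - 1 := by
      have h3 := Finset.sum_range_succ' (fun k => (-A) ^ k) (n + 1)
      have h4 := Finset.sum_range_succ (fun k => (-A) ^ k) (n + 1)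
      rw [h4, hnil, add_zero] at h3
      simp only [pow_zero] at h3
      rw [← hZ] at h3
      rw [h3]; abel
    rw [h1, h2]
    abel
  rw [add_mul, one_mul, hAZ]
  abel

lemma memHlt_one_add {N : Matrix (Fin n) (Fin n) M} (hN : SB v ν Rlt N) :
    MemHlt v ν (1 + N) := by
  refine ⟨⟨fun i j hij => ?_, fun i => ?_⟩, fun i j hij => ?_⟩
  · rw [Matrix.add_apply, Matrix.one_apply_ne hij.ne', hN.1 i j (asymm hij), add_zero]
  · rw [Matrix.add_apply, Matrix.one_apply_eq, hN.1 i i (lt_irrefl i), add_zero]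
  · have he : (1 + N) i j = N i j := by
      rw [Matrix.add_apply, Matrix.one_apply_ne hij.ne, zero_add]
    rw [he]
    exact hN.2 i j hij

lemma sb_of_memHlt {X : Matrix (Fin n) (Fin n) M} (h : MemHlt v ν X) : SB v ν Rlt (X - 1) := by
  constructor
  · intro i j hij
    rcases eq_or_ne i j with rfl | hne
    · rw [Matrix.sub_apply, h.1.2 i, Matrix.one_apply_eq, sub_self]
    · have hji : j < i := (hij |> fun h' => lt_of_le_of_ne (not_lt.1 h') (Ne.symm hne))
      rw [Matrix.sub_apply, h.1.1 i j hji, Matrix.one_apply_ne hne, sub_zero]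
  · intro i j hij
    have he : (X - 1) i j = X i j := by
      rw [Matrix.sub_apply, Matrix.one_apply_ne hij.ne, sub_zero]
    rw [he]
    exact h.2 i j hij

lemma sb_of_memHle {X : Matrix (Fin n) (Fin n) M} (h : MemHle v ν X) : SB v ν Rle (X - 1) := by
  constructor
  · intro i j hij
    rcases eq_or_ne i j with rfl | hne
    · rw [Matrix.sub_apply, h.1.2 i, Matrix.one_apply_eq, sub_self]
    · have hji : j < i := (hij |> fun h' => lt_of_le_of_ne (not_lt.1 h') (Ne.symm hne))
      rw [Matrix.sub_apply, h.1.1 i j hji, Matrix.one_apply_ne hne, sub_zero]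
  · intro i j hij
    have he : (X - 1) i j = X i j := by
      rw [Matrix.sub_apply, Matrix.one_apply_ne hij.ne, sub_zero]
    rw [he]
    exact h.2 i j hij

end Aux

/-- If `ν_{i,j} ≥ ν_{i,l} + ν_{l,j}` for `i < l < j`, then `H_{<ν}` is a
normal subgroup of `H_{≤ν}`: `H_{<ν} ⊆ H_{≤ν}`, `H_{<ν}` contains the identity, is closed
under products and inverses, and is stable under conjugation by elements of `H_{≤ν}`. -/
theorem Hlt_normalSubgroup_of_Hle {n : ℕ} {M : Type*} [Field M]
    (v : AddValuation M (WithTop ℤ)) (ν : Fin n → Fin n → ℚ)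
    (hν : ∀ i l j : Fin n, i < l → l < j → ν i l + ν l j ≤ ν i j) :
    (∀ X : Matrix (Fin n) (Fin n) M, MemHlt v ν X → MemHle v ν X) ∧
    MemHlt v ν (1 : Matrix (Fin n) (Fin n) M) ∧
    (∀ X Y : Matrix (Fin n) (Fin n) M, MemHlt v ν X → MemHlt v ν Y → MemHlt v ν (X * Y)) ∧
    (∀ X : Matrix (Fin n) (Fin n) M, MemHlt v ν X → MemHlt v ν X⁻¹) ∧
    (∀ X Y : Matrix (Fin n) (Fin n) M, MemHle v ν X → MemHlt v ν Y →
      MemHlt v ν (X * Y * X⁻¹)) := by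
  have mullt := fun {A B : Matrix (Fin n) (Fin n) M} (hA : SB v ν Rlt A) (hB : SB v ν Rlt B) =>
    SB_mul v ν hν hupLt htopLt hmonoLt (fun _ _ _ _ => haddlt) hA hB
  have mullelt := fun {A B : Matrix (Fin n) (Fin n) M} (hA : SB v ν Rle A) (hB : SB v ν Rlt B) =>
    SB_mul v ν hν hupLt htopLt hmonoLt (fun _ _ _ _ => haddlelt) hA hB
  have mulltle := fun {A B : Matrix (Fin n) (Fin n) M} (hA : SB v ν Rlt A) (hB : SB v ν Rle B) =>
    SB_mul v ν hν hupLt htopLt hmonoLt (fun _ _ _ _ => haddltle) hA hB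
  refine ⟨fun X h => ⟨h.1, fun i j hij => (h.2 i j hij).le⟩, ?_, ?_, ?_, ?_⟩
  · -- identity
    have h1 : MemHlt v ν (1 + (0 : Matrix (Fin n) (Fin n) M)) :=
      memHlt_one_add v ν (SB_zero v ν htopLt)
    simpa using h1
  · -- products
    intro X Y hX hY
    have hA := sb_of_memHlt v ν hX
    have hB := sb_of_memHlt v ν hY
    have hX1 : X = 1 + (X - 1) := by abel
    have hY1 : Y = 1 + (Y - 1) := by abel
    have hXY : X * Y = 1 + ((X - 1) + (Y - 1) + (X - 1) * (Y - 1)) := by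
      rw [hX1, hY1]; noncomm_ring
    rw [hXY]
    exact memHlt_one_add v ν (SB_add v ν hupLt (SB_add v ν hupLt hA hB) (mullt hA hB))
  · -- inverses
    intro X hX
    have hA := sb_of_memHlt v ν hX
    set A : Matrix (Fin n) (Fin n) M := X - 1 with hAdef
    have hX1 : X = 1 + A := by rw [hAdef]; abel
    set Z : Matrix (Fin n) (Fin n) M := ∑ k ∈ Finset.range (n + 1), (-A) ^ k with hZdef
    have hXZ : X * Z = 1 := by rw [hX1]; exact neumann hA.1
    have hinv : X⁻¹ = Z := Matrix.inv_eq_right_inv hXZ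
    set W : Matrix (Fin n) (Fin n) M := ∑ k ∈ Finset.Ico 1 (n + 1), (-A) ^ k with hWdef
    have hZW : Z = 1 + W := by
      rw [hZdef, Finset.range_eq_Ico, Finset.sum_eq_sum_Ico_succ_bot (Nat.succ_pos n)]
      rw [pow_zero, hWdef]
    have hW : SB v ν Rlt W := by
      apply SB_sum v ν hupLt htopLt
      intro k hk
      obtain ⟨m, rfl⟩ : ∃ m, k = m + 1 := by
        rcases Finset.mem_Ico.1 hk with ⟨h1, _⟩
        exact ⟨k - 1, by omega⟩
      exact SB_pow v ν hν hupLt htopLt hmonoLt (fun _ _ _ _ => haddlt) (SB_neg v ν hA) m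
    rw [hinv, hZW]
    exact memHlt_one_add v ν hW
  · -- conjugation
    intro X Y hX hY
    have hA := sb_of_memHle v ν hX
    have hB := sb_of_memHlt v ν hY
    set A : Matrix (Fin n) (Fin n) M := X - 1 with hAdef
    set B : Matrix (Fin n) (Fin n) M := Y - 1 with hBdef
    have hX1 : X = 1 + A := by rw [hAdef]; abel
    have hY1 : Y = 1 + B := by rw [hBdef]; abel
    set Z : Matrix (Fin n) (Fin n) M := ∑ k ∈ Finset.range (n + 1), (-A) ^ k with hZdef
    have hXZ : X * Z = 1 := by rw [hX1]; exact neumann hA.1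
    have hinv : X⁻¹ = Z := Matrix.inv_eq_right_inv hXZ
    set W : Matrix (Fin n) (Fin n) M := ∑ k ∈ Finset.Ico 1 (n + 1), (-A) ^ k with hWdef
    have hZW : Z = 1 + W := by
      rw [hZdef, Finset.range_eq_Ico, Finset.sum_eq_sum_Ico_succ_bot (Nat.succ_pos n)]
      rw [pow_zero, hWdef]
    have hW : SB v ν Rle W := by
      apply SB_sum v ν hupLe htopLe
      intro k hk
      obtain ⟨m, rfl⟩ : ∃ m, k = m + 1 := by
        rcases Finset.mem_Ico.1 hk with ⟨h1, _⟩
        exact ⟨k - 1, by omega⟩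
      exact SB_pow v ν hν hupLe htopLe hmonoLe (fun _ _ _ _ => haddle) (SB_neg v ν hA) m
    have h5 : X * Y * Z = X * Z + (X * B) * Z := by rw [hY1]; noncomm_ring
    rw [hXZ] at h5
    have h6 : (X * B) * Z = (B + A * B) + (B + A * B) * W := by
      rw [hX1, hZW]; noncomm_ring
    have hD : SB v ν Rlt ((B + A * B) + (B + A * B) * W) := by
      have hBA : SB v ν Rlt (B + A * B) := SB_add v ν hupLt hB (mullelt hA hB)
      exact SB_add v ν hupLt hBA (mulltle hBA hW)
    rw [hinv, h5, h6]
    exact memHlt_one_add v ν hD
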